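/- Let p > 1, Q the soliton of Q'' = Q - Q^p, and ℒ = -∂ₓ² + 1 - pQ^{p-1}. Define u₃(x) = -(2/(p-1))[1 + ((p+1)/2) Q'(x) ∫_ε^x Q(r)^{-1} dr] for x > 0 (any fixed ε ∈ (0,x)). Then ℒ(u₃) = 1 on (0, ∞). -/

import Mathlib

open Real Filter MeasureTheory

private lemma hasDerivAt_congr_d {f : ℝ → ℝ} {v v' x : ℝ} (h : HasDerivAt f v x)
    (hv : v' = v) : HasDerivAt f v' x := hv ▸ h

set_option maxHeartbeats 2000000 in
theorem stmt9 (p : ℝ) (hp : 1 < p) (Q : ℝ → ℝ)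
    (hQdef : ∀ x, Q x = ((p + 1) / (2 * Real.cosh ((p - 1) * x / 2) ^ 2)) ^ (1 / (p - 1)))
    (ε : ℝ) (hε : 0 < ε) :
    ∀ x : ℝ, 0 < x →
      -(deriv (deriv (fun y =>
          -(2 / (p - 1)) * (1 + ((p + 1) / 2) * deriv Q y * ∫ r in ε..y, (Q r)⁻¹))) x) +
        (1 - p * Q x ^ (p - 1)) *
          (-(2 / (p - 1)) * (1 + ((p + 1) / 2) * deriv Q x * ∫ r in ε..x, (Q r)⁻¹)) = 1 := by
  intro x hx
  have hp1 : p - 1 ≠ 0 := sub_ne_zero.mpr hp.ne'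
  have hp1' : (0:ℝ) < p - 1 := by linarith
  set a : ℝ := (p - 1) / 2 with ha
  set r : ℝ := -(2 / (p - 1)) with hr
  set C : ℝ := ((p + 1) / 2) ^ (1 / (p - 1)) with hC
  have hC0 : 0 < C := Real.rpow_pos_of_pos (by linarith) _
  have hch : ∀ y : ℝ, 0 < Real.cosh (a * y) := fun y => Real.cosh_pos _
  have harg : ∀ y : ℝ, (p - 1) * y / 2 = a * y := fun y => by rw [ha]; ring
  -- closed form of Q
  have hQeq : ∀ y, Q y = C * Real.cosh (a * y) ^ r := by
    intro y
    have hcy := hch y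
    rw [hQdef y, harg y]
    have h1 : (p + 1) / (2 * Real.cosh (a*y) ^ 2) = ((p+1)/2) * ((Real.cosh (a*y) ^ 2)⁻¹) := by
      field_simp
    rw [h1, Real.mul_rpow (by linarith) (by positivity)]
    rw [hC]
    congr 1
    rw [← Real.rpow_natCast (Real.cosh (a*y)) 2, ← Real.rpow_neg hcy.le,
      ← Real.rpow_mul hcy.le]
    congr 1
    rw [hr]
    push_cast
    ring
  have hQpos : ∀ y, 0 < Q y := fun y => by
    rw [hQeq y]; exact mul_pos hC0 (Real.rpow_pos_of_pos (hch y) r)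
  have hQp1 : Q x ^ (p - 1) = (p + 1) / (2 * Real.cosh (a * x) ^ 2) := by
    have hB : (0:ℝ) < (p + 1) / (2 * Real.cosh (a*x) ^ 2) := by positivity
    rw [hQdef x, harg x, ← Real.rpow_natCast (Real.cosh (a*x)) 2] at *
    rw [← Real.rpow_mul hB.le, one_div, inv_mul_cancel₀ hp1, Real.rpow_one]
  -- basic derivatives
  have hlin : ∀ y : ℝ, HasDerivAt (fun z : ℝ => a * z) a y := fun y => by
    simpa using (hasDerivAt_id y).const_mul a
  have hcos : ∀ y : ℝ, HasDerivAt (fun z => Real.cosh (a*z)) (Real.sinh (a*y) * a) y :=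
    fun y => (Real.hasDerivAt_cosh (a*y)).comp y (hlin y)
  have hsin : ∀ y : ℝ, HasDerivAt (fun z => Real.sinh (a*z)) (Real.cosh (a*y) * a) y :=
    fun y => (Real.hasDerivAt_sinh (a*y)).comp y (hlin y)
  have hpw : ∀ (s : ℝ) (y : ℝ), HasDerivAt (fun z => Real.cosh (a*z) ^ s)
      (Real.sinh (a*y) * a * s * Real.cosh (a*y) ^ (s-1)) y :=
    fun s y => (hcos y).rpow_const (Or.inl (hch y).ne')
  have hQfun : Q = fun y => C * Real.cosh (a*y) ^ r := funext hQeq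
  have hQd : ∀ y, HasDerivAt Q (C * (Real.sinh (a*y) * a * r * Real.cosh (a*y) ^ (r-1))) y :=
    fun y => by rw [hQfun]; exact (hpw r y).const_mul C
  have hderivQ : deriv Q = fun y => C * (Real.sinh (a*y) * a * r * Real.cosh (a*y) ^ (r-1)) :=
    funext fun y => (hQd y).deriv
  have hQcont : Continuous Q := continuous_iff_continuousAt.mpr fun y => (hQd y).continuousAt
  have hicont : Continuous fun t => (Q t)⁻¹ := hQcont.inv₀ fun t => (hQpos t).ne'
  have hInt : ∀ y : ℝ, HasDerivAt (fun z => ∫ t in ε..z, (Q t)⁻¹) ((Q y)⁻¹) y := fun y =>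
    intervalIntegral.integral_hasDerivAt_right (hicont.intervalIntegrable ε y)
      hicont.stronglyMeasurable.stronglyMeasurableAtFilter hicont.continuousAt
  -- second derivative of Q
  have hD2 : ∀ y, HasDerivAt (fun z => C * (Real.sinh (a*z) * a * r * Real.cosh (a*z) ^ (r-1)))
      (C*r*a^2*(Real.cosh (a*y)^(r-1)*Real.cosh (a*y)
        + (r-1)*(Real.cosh (a*y)^(r-1-1)*Real.sinh (a*y)^2))) y := by
    intro y
    refine hasDerivAt_congr_d
      (((((hsin y).mul_const a).mul_const r).mul (hpw (r-1) y)).const_mul C) ?_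
    ring
  -- third derivative of Q
  have hD3 : HasDerivAt (fun z => C*r*a^2*(Real.cosh (a*z)^(r-1)*Real.cosh (a*z)
        + (r-1)*(Real.cosh (a*z)^(r-1-1)*Real.sinh (a*z)^2)))
      (C*r*a^3*((r-1)*(Real.cosh (a*x)^(r-1-1)*(Real.sinh (a*x)*Real.cosh (a*x)))
        + Real.cosh (a*x)^(r-1)*Real.sinh (a*x)
        + (r-1)*((r-2)*(Real.cosh (a*x)^(r-1-1-1)*Real.sinh (a*x)^3)
          + 2*(Real.cosh (a*x)^(r-1-1)*(Real.sinh (a*x)*Real.cosh (a*x)))))) x := by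
    refine hasDerivAt_congr_d
      ((((hpw (r-1) x).mul (hcos x)).add
        (((hpw (r-1-1) x).mul ((hsin x).pow 2)).const_mul (r-1))).const_mul (C*r*a^2)) ?_
    simp only [Pi.pow_apply]
    ring
  -- first derivative of u
  have hu1 : ∀ y, HasDerivAt (fun z => r * (1 + (p+1)/2
        * (C * (Real.sinh (a*z) * a * r * Real.cosh (a*z) ^ (r-1))) * ∫ t in ε..z, (Q t)⁻¹))
      (r * (((p+1)/2 * (C*r*a^2*(Real.cosh (a*y)^(r-1)*Real.cosh (a*y)
          + (r-1)*(Real.cosh (a*y)^(r-1-1)*Real.sinh (a*y)^2)))) * (∫ t in ε..y, (Q t)⁻¹)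
        + ((p+1)/2 * (C * (Real.sinh (a*y) * a * r * Real.cosh (a*y) ^ (r-1)))) * (Q y)⁻¹)) y :=
    fun y => ((((hD2 y).const_mul ((p+1)/2)).mul (hInt y)).const_add 1).const_mul r
  simp only [hderivQ]
  rw [show (deriv (fun y => -(2 / (p - 1)) * (1 + (p+1)/2
        * (C * (Real.sinh (a*y) * a * r * Real.cosh (a*y) ^ (r-1))) * ∫ t in ε..y, (Q t)⁻¹)))
      = fun y => (r * (((p+1)/2 * (C*r*a^2*(Real.cosh (a*y)^(r-1)*Real.cosh (a*y)
          + (r-1)*(Real.cosh (a*y)^(r-1-1)*Real.sinh (a*y)^2)))) * (∫ t in ε..y, (Q t)⁻¹)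
        + ((p+1)/2 * (C * (Real.sinh (a*y) * a * r * Real.cosh (a*y) ^ (r-1)))) * (Q y)⁻¹))
      from funext fun y => (hu1 y).deriv]
  -- second derivative of u
  have hu2 : HasDerivAt (fun y => (r * (((p+1)/2 * (C*r*a^2*(Real.cosh (a*y)^(r-1)*Real.cosh (a*y)
          + (r-1)*(Real.cosh (a*y)^(r-1-1)*Real.sinh (a*y)^2)))) * (∫ t in ε..y, (Q t)⁻¹)
        + ((p+1)/2 * (C * (Real.sinh (a*y) * a * r * Real.cosh (a*y) ^ (r-1)))) * (Q y)⁻¹)))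
      (r * ((((p+1)/2 * (C*r*a^3*((r-1)*(Real.cosh (a*x)^(r-1-1)*(Real.sinh (a*x)*Real.cosh (a*x)))
          + Real.cosh (a*x)^(r-1)*Real.sinh (a*x)
          + (r-1)*((r-2)*(Real.cosh (a*x)^(r-1-1-1)*Real.sinh (a*x)^3)
            + 2*(Real.cosh (a*x)^(r-1-1)*(Real.sinh (a*x)*Real.cosh (a*x))))))) * (∫ t in ε..x, (Q t)⁻¹)
          + ((p+1)/2 * (C*r*a^2*(Real.cosh (a*x)^(r-1)*Real.cosh (a*x)
          + (r-1)*(Real.cosh (a*x)^(r-1-1)*Real.sinh (a*x)^2)))) * (Q x)⁻¹)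
        + (((p+1)/2 * (C*r*a^2*(Real.cosh (a*x)^(r-1)*Real.cosh (a*x)
          + (r-1)*(Real.cosh (a*x)^(r-1-1)*Real.sinh (a*x)^2)))) * (Q x)⁻¹
          + ((p+1)/2 * (C * (Real.sinh (a*x) * a * r * Real.cosh (a*x) ^ (r-1))))
            * (-(C * (Real.sinh (a*x) * a * r * Real.cosh (a*x) ^ (r-1))) / Q x ^ 2)))) x :=
    (((hD3.const_mul ((p+1)/2)).mul (hInt x)).add
      (((hD2 x).const_mul ((p+1)/2)).mul ((hQd x).inv (hQpos x).ne'))).const_mul r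
  rw [hu2.deriv]
  -- endgame: pure algebra
  rw [hQp1, hQeq x]
  have hchx := hch x
  have eA : Real.cosh (a*x) ^ (r-1) = Real.cosh (a*x) ^ (r-1-1-1) * Real.cosh (a*x) * Real.cosh (a*x) := by
    conv_lhs => rw [show r-1 = ((r-1-1-1)+1)+1 by ring]
    rw [Real.rpow_add_one hchx.ne', Real.rpow_add_one hchx.ne']
  have eB : Real.cosh (a*x) ^ (r-1-1) = Real.cosh (a*x) ^ (r-1-1-1) * Real.cosh (a*x) := by
    conv_lhs => rw [show r-1-1 = (r-1-1-1)+1 by ring]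
    rw [Real.rpow_add_one hchx.ne']
  have eC : Real.cosh (a*x) ^ r = Real.cosh (a*x) ^ (r-1-1-1) * Real.cosh (a*x) * Real.cosh (a*x) * Real.cosh (a*x) := by
    conv_lhs => rw [show r = (((r-1-1-1)+1)+1)+1 by ring]
    rw [Real.rpow_add_one hchx.ne', Real.rpow_add_one hchx.ne', Real.rpow_add_one hchx.ne']
  rw [eC, eA, eB]
  set G := Real.cosh (a*x) ^ (r-1-1-1) with hG
  have hG0 : (0:ℝ) < G := Real.rpow_pos_of_pos hchx _
  set CH := Real.cosh (a*x) with hCH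
  have hCH0 : (0:ℝ) < CH := Real.cosh_pos _
  set SH := Real.sinh (a*x) with hSH
  have hSH2 : SH^2 = CH^2 - 1 := Real.sinh_sq (a*x)
  have hSH3 : SH^3 = (CH^2-1)*SH := by rw [← hSH2]; ring
  clear_value G CH SH
  rw [ha, hr]
  have h2 : (0:ℝ) < p + 1 := by linarith
  field_simp
  simp only [one_div]
  ring_nf
  simp only [hSH3, hSH2]
  ring
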